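/- Let S be a finite set of more than 5 distinct 2-element sets of odd 2-characteristics such that ∑_{N ∈ S} S(N) = 0, where S({n₁, n₂}) := n₁ + n₂. Then there exists a nonempty proper subset T ⊊ S with ∑_{N ∈ T} S(N) = 0. (This is the combinatorial content of the statement that remarkable factors of degree greater than 5 are reducible: since S(N) ≠ 0 for every 2-element set N of odd characteristics and the S(N) live in the 4-dimensional ZMod 2 vector space (ZMod 2)² × (ZMod 2)², any family of more than 5 of them summing to zero contains a proper nonempty subfamily summing to zero.) -/

import Mathlib

open scoped Classical

/-- A 2-characteristic: a pair `m = (m', m'')` with `m', m'' ∈ (ZMod 2)²`. -/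
abbrev Char2 : Type := (ZMod 2 × ZMod 2) × (ZMod 2 × ZMod 2)

/-- `m` is even if `m'₁·m''₁ + m'₂·m''₂ = 0` in `ZMod 2`. -/
def IsEvenChar (m : Char2) : Prop := m.1.1 * m.2.1 + m.1.2 * m.2.2 = 0

/-- `m` is odd if it is not even. -/
def IsOddChar (m : Char2) : Prop := ¬ IsEvenChar m

/-- The finset of all (10) even 2-characteristics. -/
noncomputable def EvenChars : Finset Char2 := Finset.univ.filter IsEvenChar

/-- `C₃⁻`: 3-element sets of even characteristics whose sum is odd. -/
def C3minus (M : Finset Char2) : Prop :=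
  M ⊆ EvenChars ∧ M.card = 3 ∧ IsOddChar (∑ m ∈ M, m)

/-- `C₃⁺`: 3-element sets of even characteristics whose sum is even. -/
def C3plus (M : Finset Char2) : Prop :=
  M ⊆ EvenChars ∧ M.card = 3 ∧ IsEvenChar (∑ m ∈ M, m)

/-- `C₄⁻`: 4-element sets of even characteristics all of whose 3-element subsets lie in `C₃⁻`. -/
def C4minus (M : Finset Char2) : Prop :=
  M ⊆ EvenChars ∧ M.card = 4 ∧ ∀ T ⊆ M, T.card = 3 → C3minus T

/-- `C₄⁺`: 4-element sets of even characteristics all of whose 3-element subsets lie in `C₃⁺`. -/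
def C4plus (M : Finset Char2) : Prop :=
  M ⊆ EvenChars ∧ M.card = 4 ∧ ∀ T ⊆ M, T.card = 3 → C3plus T

/-- `C₅⁻`: 5-element sets of even characteristics containing exactly one element of `C₄⁻`. -/
def C5minus (M : Finset Char2) : Prop :=
  M ⊆ EvenChars ∧ M.card = 5 ∧ ∃! T, T ⊆ M ∧ C4minus T

/-- `C₅⁺`: 5-element sets of even characteristics containing exactly one element of `C₄⁺`. -/
def C5plus (M : Finset Char2) : Prop :=
  M ⊆ EvenChars ∧ M.card = 5 ∧ ∃! T, T ⊆ M ∧ C4plus T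

/-- `C₆⁻`: 6-element sets of even characteristics whose complement lies in `C₄⁺`. -/
def C6minus (M : Finset Char2) : Prop :=
  M ⊆ EvenChars ∧ M.card = 6 ∧ C4plus (EvenChars \ M)

/-- `C₆⁺`: 6-element sets of even characteristics whose complement lies in `C₄⁻`. -/
def C6plus (M : Finset Char2) : Prop :=
  M ⊆ EvenChars ∧ M.card = 6 ∧ C4minus (EvenChars \ M)

theorem remarkable_factor_reducible (S : Finset (Finset Char2))
    (hcard2 : ∀ N ∈ S, N.card = 2)
    (hodd : ∀ N ∈ S, ∀ n ∈ N, IsOddChar n)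
    (hS : 5 < S.card)
    (hsum : ∑ N ∈ S, ∑ n ∈ N, n = 0) :
    ∃ T : Finset (Finset Char2), T ⊆ S ∧ T ≠ ∅ ∧ T ≠ S ∧ ∑ N ∈ T, ∑ n ∈ N, n = 0 := by

  classical
  -- pick a 5-element subset of S
  obtain ⟨S5, hS5sub, hS5card⟩ := Finset.exists_subset_card_eq (s := S) (n := 5) (le_of_lt hS)
  set f : Finset Char2 → Char2 := fun N => ∑ n ∈ N, n with hf
  -- pigeonhole: two distinct subsets of S5 with equal f-sum
  have hcard : (Finset.univ : Finset Char2).card < S5.powerset.card := by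
    simp [Finset.card_powerset, hS5card]
  obtain ⟨A, hA, B, hB, hAB, hgAB⟩ :=
    Finset.exists_ne_map_eq_of_card_lt_of_maps_to hcard
      (fun A _ => Finset.mem_univ (∑ N ∈ A, f N))
  rw [Finset.mem_powerset] at hA hB
  have hcancel : ∑ N ∈ A \ B, f N = ∑ N ∈ B \ A, f N := by
    have h1 : ∑ N ∈ A ∩ B, f N + ∑ N ∈ A \ B, f N = ∑ N ∈ A, f N :=
      Finset.sum_inter_add_sum_sdiff A B f
    have h2 : ∑ N ∈ B ∩ A, f N + ∑ N ∈ B \ A, f N = ∑ N ∈ B, f N :=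
      Finset.sum_inter_add_sum_sdiff B A f
    rw [Finset.inter_comm] at h2
    have := h1.trans (hgAB.trans h2.symm)
    exact add_left_cancel this
  refine ⟨(A \ B) ∪ (B \ A), ?_, ?_, ?_, ?_⟩
  · exact Finset.union_subset ((Finset.sdiff_subset.trans hA).trans hS5sub)
      ((Finset.sdiff_subset.trans hB).trans hS5sub)
  · intro h
    apply hAB
    rw [Finset.union_eq_empty] at h
    have h1 := Finset.sdiff_eq_empty_iff_subset.mp h.1
    have h2 := Finset.sdiff_eq_empty_iff_subset.mp h.2
    exact Finset.Subset.antisymm h1 h2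
  · intro h
    have : ((A \ B) ∪ (B \ A)).card ≤ S5.card :=
      Finset.card_le_card (Finset.union_subset (Finset.sdiff_subset.trans hA)
        (Finset.sdiff_subset.trans hB))
    rw [h, hS5card] at this
    omega
  · have hdisj : Disjoint (A \ B) (B \ A) :=
      disjoint_sdiff_sdiff
    rw [Finset.sum_union hdisj]
    have : ∀ x : Char2, x + x = 0 := by decide
    simp only [hf] at hcancel
    rw [hcancel]
    exact this _
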